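/- Let A be an n×n complex matrix and p ≥ 2. Then the Schatten (p/2)-quasinorm of A² satisfies ‖A²‖_{p/2}^{p/2} ≤ ‖A‖_p^p. -/

import Mathlib

open Matrix Finset BigOperators

namespace SchattenAux

instance {k n : ℕ} : DecidablePred (fun f : Fin k → Fin n => StrictMono f) := fun f =>
  decidable_of_iff (∀ i j : Fin k, i < j → f i < f j) ⟨fun h a b hab => h a b hab, fun h a b hab => h hab⟩

/-- The finset of strictly monotone tuples `Fin k → Fin n`. -/
def monoTuples (k n : ℕ) : Finset (Fin k → Fin n) :=
  Finset.univ.filter (fun f => StrictMono f)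

lemma mem_monoTuples {k n : ℕ} {f : Fin k → Fin n} :
    f ∈ monoTuples k n ↔ StrictMono f := by
  simp [monoTuples]

lemma exists_strictMono_comp_perm {k n : ℕ} (f : Fin k → Fin n) (hf : Function.Injective f) :
    ∃ (g : Fin k → Fin n) (σ : Equiv.Perm (Fin k)), StrictMono g ∧ f = g ∘ σ := by
  classical
  set S : Finset (Fin n) := Finset.image f Finset.univ with hS
  have hcard : S.card = k := by
    rw [hS, Finset.card_image_of_injective _ hf, Finset.card_univ, Fintype.card_fin]
  have hmemS : ∀ i, f i ∈ S := fun i => Finset.mem_image_of_mem f (Finset.mem_univ i)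
  have hbij : Function.Bijective (fun i : Fin k => (⟨f i, hmemS i⟩ : S)) := by
    rw [Fintype.bijective_iff_injective_and_card]
    refine ⟨fun a b hab => hf (congrArg Subtype.val hab), ?_⟩
    simp [Fintype.card_coe, hcard]
  let ef : Fin k ≃ S := Equiv.ofBijective _ hbij
  let eS : Fin k ≃ S := (S.orderIsoOfFin hcard).toEquiv
  refine ⟨S.orderEmbOfFin hcard, ef.trans eS.symm, (S.orderEmbOfFin hcard).strictMono, ?_⟩
  funext i
  have h1 : eS (eS.symm (ef i)) = ef i := eS.apply_symm_apply _
  have h2 : (eS (eS.symm (ef i)) : Fin n) = S.orderEmbOfFin hcard (eS.symm (ef i)) :=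
    Finset.coe_orderIsoOfFin_apply S hcard _
  have h3 : (↑(ef i) : Fin n) = f i := rfl
  rw [h1, h3] at h2
  exact h2

lemma det_submatrix_zero_of_not_injective {k n : ℕ} (M : Matrix (Fin k) (Fin n) ℂ)
    (f : Fin k → Fin n) (hf : ¬ Function.Injective f) :
    det (M.submatrix id f) = 0 := by
  rw [Function.Injective] at hf
  push_neg at hf
  obtain ⟨i, j, hij, hne⟩ := hf
  exact det_zero_of_column_eq hne (fun l => by simp [Matrix.submatrix_apply, hij])

lemma inner_sum_eq {k n : ℕ} (M : Matrix (Fin k) (Fin n) ℂ) (N : Matrix (Fin n) (Fin k) ℂ)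
    (f : Fin k → Fin n) :
    ∑ σ : Equiv.Perm (Fin k), ((Equiv.Perm.sign σ : ℤ) : ℂ) * ∏ i, M (σ i) (f i) * N (f i) i
      = (∏ i, N (f i) i) * det (M.submatrix id f) := by
  rw [det_apply', Finset.mul_sum]
  refine Finset.sum_congr rfl fun σ _ => ?_
  rw [Finset.prod_mul_distrib]
  simp [Matrix.submatrix_apply]
  ring

/-- Cauchy–Binet. -/
theorem det_mul_rect {k n : ℕ} (M : Matrix (Fin k) (Fin n) ℂ) (N : Matrix (Fin n) (Fin k) ℂ) :
    det (M * N) = ∑ g ∈ monoTuples k n, det (M.submatrix id g) * det (N.submatrix g id) := by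
  classical
  have step1 : det (M * N)
      = ∑ f : Fin k → Fin n, ∑ σ : Equiv.Perm (Fin k),
          ((Equiv.Perm.sign σ : ℤ) : ℂ) * ∏ i, M (σ i) (f i) * N (f i) i := by
    simp only [det_apply', mul_apply, Finset.prod_univ_sum, Finset.mul_sum,
      Fintype.piFinset_univ]
    rw [Finset.sum_comm]
  rw [step1]
  have step2 : ∀ f : Fin k → Fin n,
      (∑ σ : Equiv.Perm (Fin k), ((Equiv.Perm.sign σ : ℤ) : ℂ) * ∏ i, M (σ i) (f i) * N (f i) i)
        = (∏ i, N (f i) i) * det (M.submatrix id f) := inner_sum_eq M N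
  simp only [step2]
  rw [← Finset.sum_filter_add_sum_filter_not Finset.univ (fun f : Fin k → Fin n => Function.Injective f)]
  have hzero : ∑ f ∈ Finset.univ.filter (fun f : Fin k → Fin n => ¬ Function.Injective f),
      (∏ i, N (f i) i) * det (M.submatrix id f) = 0 := by
    refine Finset.sum_eq_zero fun f hf => ?_
    rw [Finset.mem_filter] at hf
    rw [det_submatrix_zero_of_not_injective M f hf.2, mul_zero]
  rw [hzero, add_zero]
  -- now bijection with pairs (g, σ)
  have hbij : ∑ f ∈ Finset.univ.filter (fun f : Fin k → Fin n => Function.Injective f),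
      (∏ i, N (f i) i) * det (M.submatrix id f)
      = ∑ p ∈ (monoTuples k n) ×ˢ (Finset.univ : Finset (Equiv.Perm (Fin k))),
          (∏ i, N ((p.1 ∘ p.2) i) i) * det (M.submatrix id (p.1 ∘ p.2)) := by
    refine (Finset.sum_bij (fun p _ => p.1 ∘ p.2) ?_ ?_ ?_ ?_).symm
    · rintro ⟨g, σ⟩ hp
      rw [Finset.mem_product, mem_monoTuples] at hp
      simp only [Finset.mem_filter, Finset.mem_univ, true_and]
      exact hp.1.injective.comp σ.injective
    · rintro ⟨g₁, σ₁⟩ hp₁ ⟨g₂, σ₂⟩ hp₂ heq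
      rw [Finset.mem_product, mem_monoTuples] at hp₁ hp₂
      have heq' : g₁ ∘ σ₁ = g₂ ∘ σ₂ := heq
      have himg : Finset.image g₁ Finset.univ = Finset.image g₂ Finset.univ := by
        have h1 : Finset.image (g₁ ∘ σ₁) Finset.univ = Finset.image g₁ Finset.univ := by
          rw [← Finset.image_image]
          congr 1
          exact Finset.image_univ_equiv σ₁
        have h2 : Finset.image (g₂ ∘ σ₂) Finset.univ = Finset.image g₂ Finset.univ := by
          rw [← Finset.image_image]
          congr 1
          exact Finset.image_univ_equiv σ₂
        rw [← h1, ← h2, heq']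
      have hcard : (Finset.image g₁ Finset.univ).card = k := by
        rw [Finset.card_image_of_injective _ hp₁.1.injective, Finset.card_univ, Fintype.card_fin]
      have hg₁ : g₁ = (Finset.image g₁ Finset.univ).orderEmbOfFin hcard :=
        Finset.orderEmbOfFin_unique hcard (fun x => Finset.mem_image_of_mem _ (Finset.mem_univ x)) hp₁.1
      have hg₂ : g₂ = (Finset.image g₁ Finset.univ).orderEmbOfFin hcard :=
        Finset.orderEmbOfFin_unique hcard
          (fun x => himg ▸ Finset.mem_image_of_mem _ (Finset.mem_univ x)) hp₂.1
      have hgg : g₁ = g₂ := hg₁.trans hg₂.symm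
      subst hgg
      have hσ : σ₁ = σ₂ := by
        ext i
        exact congrArg Fin.val (hp₁.1.injective (congrFun heq' i))
      rw [hσ]
    · intro f hf
      rw [Finset.mem_filter] at hf
      obtain ⟨g, σ, hg, hfg⟩ := exists_strictMono_comp_perm f hf.2
      exact ⟨⟨g, σ⟩, Finset.mem_product.mpr ⟨mem_monoTuples.mpr hg, Finset.mem_univ _⟩, hfg.symm⟩
    · intros; rfl
  rw [hbij, Finset.sum_product]
  refine Finset.sum_congr rfl fun g hg => ?_
  -- inner sum over σ
  have hsub : ∀ σ : Equiv.Perm (Fin k),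
      M.submatrix id (g ∘ σ) = (M.submatrix id g).submatrix id σ := fun σ => by
    rw [Matrix.submatrix_submatrix]; rfl
  calc ∑ σ : Equiv.Perm (Fin k), (∏ i, N ((g ∘ σ) i) i) * det (M.submatrix id (g ∘ σ))
      = ∑ σ : Equiv.Perm (Fin k), det (M.submatrix id g) *
          (((Equiv.Perm.sign σ : ℤ) : ℂ) * ∏ i, (N.submatrix g id) (σ i) i) := by
        refine Finset.sum_congr rfl fun σ _ => ?_
        rw [hsub σ, Matrix.det_permute']
        simp [Matrix.submatrix_apply]
        ring
    _ = det (M.submatrix id g) * det (N.submatrix g id) := by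
        rw [← Finset.mul_sum]
        congr 1
        exact (det_apply' _).symm


lemma submatrix_mul_left {k n : ℕ} (X Y : Matrix (Fin n) (Fin n) ℂ) (f : Fin k → Fin n) :
    (X.submatrix f id) * Y = (X * Y).submatrix f id := by
  ext i j
  simp [Matrix.mul_apply, Matrix.submatrix_apply]

lemma submatrix_mul_submatrix {k n : ℕ} (X Y : Matrix (Fin n) (Fin n) ℂ) (f g : Fin k → Fin n) :
    (X.submatrix f id) * (Y.submatrix id g) = (X * Y).submatrix f g := by
  ext i j
  simp [Matrix.mul_apply, Matrix.submatrix_apply]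

lemma submatrix_conj_sandwich {k n : ℕ} (V N : Matrix (Fin n) (Fin n) ℂ) (f : Fin k → Fin n) :
    (V.submatrix id f)ᴴ * N * (V.submatrix id f) = (Vᴴ * N * V).submatrix f f := by
  rw [Matrix.conjTranspose_submatrix, submatrix_mul_left, submatrix_mul_submatrix]

/-- `det (Mᴴ D M)` as a sum of nonnegative real terms (Cauchy–Binet expansion). -/
lemma det_conj_diagonal {k n : ℕ} (w : Fin n → ℝ) (M : Matrix (Fin n) (Fin k) ℂ) :
    det (Mᴴ * diagonal (fun i => (w i : ℂ)) * M)
      = ((∑ g ∈ monoTuples k n,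
            (∏ i, w (g i)) * Complex.normSq (det (M.submatrix g id)) : ℝ) : ℂ) := by
  rw [det_mul_rect (Mᴴ * diagonal (fun i => (w i : ℂ))) M]
  push_cast
  refine Finset.sum_congr rfl fun g hg => ?_
  have hsub : (Mᴴ * diagonal (fun i => (w i : ℂ))).submatrix id g
      = (Mᴴ.submatrix id g) * diagonal (fun j => (w (g j) : ℂ)) := by
    ext i j
    simp [Matrix.mul_diagonal, Matrix.submatrix_apply]
  rw [hsub, det_mul, det_diagonal]
  have hconj : (Mᴴ.submatrix id g).det = star (M.submatrix g id).det := by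
    rw [← Matrix.conjTranspose_submatrix, det_conjTranspose]
  rw [hconj]
  have hns : star (M.submatrix g id).det * (M.submatrix g id).det
      = ((Complex.normSq (M.submatrix g id).det : ℝ) : ℂ) := by
    rw [Complex.star_def, mul_comm, Complex.mul_conj]
  calc star (M.submatrix g id).det * (∏ i, (w (g i) : ℂ)) * (M.submatrix g id).det
      = (∏ i, (w (g i) : ℂ)) * (star (M.submatrix g id).det * (M.submatrix g id).det) := by ring
    _ = _ := by rw [hns]

/-- The workhorse: one Ky-Fan-determinant style bound. -/
lemma weyl_step {k n : ℕ} (A : Matrix (Fin n) (Fin n) ℂ) (f : Fin k → Fin n)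
    (hf : Function.Injective f) (b : ℝ) (hb0 : 0 ≤ b)
    (hb : ∀ g : Fin k → Fin n, Function.Injective g →
      ∏ i, (isHermitian_conjTranspose_mul_self A).eigenvalues (g i) ≤ b) :
    ∏ i, (isHermitian_conjTranspose_mul_self (A * A)).eigenvalues (f i) ≤ b * b := by
  classical
  set hH := isHermitian_conjTranspose_mul_self A with hHdef
  set hN := isHermitian_conjTranspose_mul_self (A * A) with hNdef
  set μ : Fin n → ℝ := hH.eigenvalues with hμdef
  set ν : Fin n → ℝ := hN.eigenvalues with hνdef
  set U : Matrix (Fin n) (Fin n) ℂ := ↑hH.eigenvectorUnitary with hUdef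
  set V : Matrix (Fin n) (Fin n) ℂ := ↑hN.eigenvectorUnitary with hVdef
  have hUUt : U * Uᴴ = 1 := by
    rw [← Matrix.star_eq_conjTranspose]
    exact (Matrix.mem_unitaryGroup_iff).mp hH.eigenvectorUnitary.2
  have hVV : Vᴴ * V = 1 := by
    rw [← Matrix.star_eq_conjTranspose]
    exact (Matrix.mem_unitaryGroup_iff').mp hN.eigenvectorUnitary.2
  -- spectral facts
  have hHspec : Aᴴ * A = U * diagonal (fun i => (μ i : ℂ)) * Uᴴ := by
    have h := hH.spectral_theorem
    rw [Unitary.conjStarAlgAut_apply, Matrix.star_eq_conjTranspose] at h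
    exact h
  have hNdiag : Vᴴ * ((A * A)ᴴ * (A * A)) * V = diagonal (fun i => (ν i : ℂ)) := by
    have h := hN.conjStarAlgAut_star_eigenvectorUnitary
    rw [Unitary.conjStarAlgAut_apply, Unitary.coe_star, star_star, Matrix.star_eq_conjTranspose] at h
    exact h
  set Q : Matrix (Fin n) (Fin k) ℂ := V.submatrix id f with hQdef
  -- the weighted sums
  set W1 : Matrix (Fin n) (Fin k) ℂ → ℝ := fun M =>
    ∑ g ∈ monoTuples k n, Complex.normSq (det (M.submatrix g id)) with hW1def
  set Wμ : Matrix (Fin n) (Fin k) ℂ → ℝ := fun M =>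
    ∑ g ∈ monoTuples k n, (∏ i, μ (g i)) * Complex.normSq (det (M.submatrix g id)) with hWμdef
  have hW1eq : ∀ M : Matrix (Fin n) (Fin k) ℂ, det (Mᴴ * M) = ((W1 M : ℝ) : ℂ) := by
    intro M
    have h1 : Mᴴ * diagonal (fun _ : Fin n => ((1 : ℝ) : ℂ)) * M = Mᴴ * M := by
      simp
    rw [← h1, det_conj_diagonal]
    simp [hW1def]
  have hWbound : ∀ M : Matrix (Fin n) (Fin k) ℂ, Wμ M ≤ b * W1 M := by
    intro M
    rw [hW1def, hWμdef, Finset.mul_sum]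
    refine Finset.sum_le_sum fun g hg => ?_
    exact mul_le_mul_of_nonneg_right
      (hb g ((mem_monoTuples.mp hg).injective)) (Complex.normSq_nonneg _)
  -- key conjugation identity
  have hdet_eq : ∀ J : Matrix (Fin n) (Fin k) ℂ,
      det (Jᴴ * (Aᴴ * A) * J) = ((Wμ (Uᴴ * J) : ℝ) : ℂ) := by
    intro J
    have hc : Jᴴ * (Aᴴ * A) * J
        = (Uᴴ * J)ᴴ * diagonal (fun i => (μ i : ℂ)) * (Uᴴ * J) := by
      rw [hHspec, Matrix.conjTranspose_mul, Matrix.conjTranspose_conjTranspose]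
      simp only [Matrix.mul_assoc]
    rw [hc, det_conj_diagonal]
  -- step a
  have hQN : Qᴴ * ((A * A)ᴴ * (A * A)) * Q = diagonal (fun j => (ν (f j) : ℂ)) := by
    rw [hQdef, submatrix_conj_sandwich, hNdiag, Matrix.submatrix_diagonal _ f hf]
    rfl
  have hQN2 : Qᴴ * ((A * A)ᴴ * (A * A)) * Q = (A * Q)ᴴ * (Aᴴ * A) * (A * Q) := by
    have h1 : (A * A)ᴴ = Aᴴ * Aᴴ := Matrix.conjTranspose_mul A A
    have h2 : (A * Q)ᴴ = Qᴴ * Aᴴ := Matrix.conjTranspose_mul A Q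
    rw [h1, h2]
    simp only [Matrix.mul_assoc]
  have hstepa : ∏ i, ν (f i) = Wμ (Uᴴ * (A * Q)) := by
    have h1 : ((∏ i, ν (f i) : ℝ) : ℂ) = ((Wμ (Uᴴ * (A * Q)) : ℝ) : ℂ) := by
      rw [← hdet_eq (A * Q), ← hQN2, hQN, det_diagonal]
      push_cast
      rfl
    exact_mod_cast h1
  -- step e : W1 (Uᴴ * (A*Q)) = Wμ (Uᴴ * Q)
  have hstepe : W1 (Uᴴ * (A * Q)) = Wμ (Uᴴ * Q) := by
    have h1 : ((W1 (Uᴴ * (A * Q)) : ℝ) : ℂ) = ((Wμ (Uᴴ * Q) : ℝ) : ℂ) := by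
      rw [← hW1eq, ← hdet_eq Q]
      have h2 : (Uᴴ * (A * Q))ᴴ * (Uᴴ * (A * Q)) = Qᴴ * Aᴴ * ((U * Uᴴ) * (A * Q)) := by
        rw [Matrix.conjTranspose_mul, Matrix.conjTranspose_conjTranspose,
          Matrix.conjTranspose_mul A Q]
        simp only [Matrix.mul_assoc]
      rw [h2, hUUt, Matrix.one_mul]
      simp only [Matrix.mul_assoc]
    exact_mod_cast h1
  -- step g : W1 (Uᴴ * Q) = 1
  have hstepg : W1 (Uᴴ * Q) = 1 := by
    have h1 : ((W1 (Uᴴ * Q) : ℝ) : ℂ) = 1 := by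
      rw [← hW1eq]
      have h2 : (Uᴴ * Q)ᴴ * (Uᴴ * Q) = Qᴴ * ((U * Uᴴ) * Q) := by
        rw [Matrix.conjTranspose_mul, Matrix.conjTranspose_conjTranspose]
        simp only [Matrix.mul_assoc]
      rw [h2, hUUt, Matrix.one_mul]
      have h3 : Qᴴ * Q = (Vᴴ * V).submatrix f f := by
        rw [hQdef, Matrix.conjTranspose_submatrix, submatrix_mul_submatrix]
      rw [h3, hVV]
      have h4 : (1 : Matrix (Fin n) (Fin n) ℂ).submatrix f f
          = (1 : Matrix (Fin k) (Fin k) ℂ) := by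
        rw [show (1 : Matrix (Fin n) (Fin n) ℂ)
            = diagonal (fun _ => (1:ℂ)) from (Matrix.diagonal_one).symm,
          Matrix.submatrix_diagonal _ f hf]
        exact Matrix.diagonal_one
      rw [h4, det_one]
    exact_mod_cast h1
  calc ∏ i, ν (f i) = Wμ (Uᴴ * (A * Q)) := hstepa
    _ ≤ b * W1 (Uᴴ * (A * Q)) := hWbound _
    _ = b * Wμ (Uᴴ * Q) := by rw [hstepe]
    _ ≤ b * (b * W1 (Uᴴ * Q)) := mul_le_mul_of_nonneg_left (hWbound _) hb0
    _ = b * b := by rw [hstepg, mul_one]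


/-! ### Analytic part: log-majorization implies sum domination -/

lemma abel_aux (c D : ℕ → ℝ) (hD0 : D 0 = 0) : ∀ n : ℕ, (∀ i, i ≤ n → 0 ≤ c i) →
    (∀ i, i < n → c (i + 1) ≤ c i) → (∀ k, k ≤ n → D k ≤ 0) →
    ∑ i ∈ Finset.range n, c i * (D (i + 1) - D i) ≤ c n * D n := by
  intro n
  induction n with
  | zero => intro _ _ _; simp [hD0]
  | succ m ih =>
    intro hc0 hca hD
    rw [Finset.sum_range_succ]
    have h1 : ∑ i ∈ Finset.range m, c i * (D (i + 1) - D i) ≤ c m * D m :=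
      ih (fun i hi => hc0 i (hi.trans (Nat.le_succ m)))
        (fun i hi => hca i (hi.trans_le (Nat.le_succ m)))
        (fun k hk => hD k (hk.trans (Nat.le_succ m)))
    have h2 : c m * D (m + 1) ≤ c (m + 1) * D (m + 1) :=
      mul_le_mul_of_nonpos_right (hca m (Nat.lt_succ_self m)) (hD (m + 1) le_rfl)
    nlinarith [h1, h2]

lemma pos_core (x y : ℕ → ℝ) (n : ℕ) (hx : ∀ i, i < n → 0 < x i) (hy : ∀ i, i < n → 0 < y i)
    (hxa : ∀ i j, i ≤ j → j < n → x j ≤ x i)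
    (h : ∀ k, k ≤ n → ∏ i ∈ Finset.range k, x i ≤ ∏ i ∈ Finset.range k, y i) :
    ∑ i ∈ Finset.range n, x i ≤ ∑ i ∈ Finset.range n, y i := by
  set d : ℕ → ℝ := fun i => Real.log (x i) - Real.log (y i) with hd
  set D : ℕ → ℝ := fun k => ∑ i ∈ Finset.range k, d i with hD
  have hD0 : D 0 = 0 := by simp [hD]
  have hDle : ∀ k, k ≤ n → D k ≤ 0 := by
    intro k hk
    have hxpos : 0 < ∏ i ∈ Finset.range k, x i :=
      Finset.prod_pos fun i hi => hx i ((Finset.mem_range.mp hi).trans_le hk)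
    have hypos : 0 < ∏ i ∈ Finset.range k, y i :=
      Finset.prod_pos fun i hi => hy i ((Finset.mem_range.mp hi).trans_le hk)
    have hlx : Real.log (∏ i ∈ Finset.range k, x i) = ∑ i ∈ Finset.range k, Real.log (x i) :=
      Real.log_prod fun i hi => (hx i ((Finset.mem_range.mp hi).trans_le hk)).ne'
    have hly : Real.log (∏ i ∈ Finset.range k, y i) = ∑ i ∈ Finset.range k, Real.log (y i) :=
      Real.log_prod fun i hi => (hy i ((Finset.mem_range.mp hi).trans_le hk)).ne'
    have : Real.log (∏ i ∈ Finset.range k, x i) ≤ Real.log (∏ i ∈ Finset.range k, y i) :=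
      Real.log_le_log hxpos (h k hk)
    rw [hlx, hly] at this
    simp only [hD, hd]
    rw [Finset.sum_sub_distrib]
    exact sub_nonpos.mpr this
  set c : ℕ → ℝ := fun i => if i < n then x i else 0 with hc
  have key : ∑ i ∈ Finset.range n, c i * (D (i + 1) - D i) ≤ c n * D n := by
    refine abel_aux c D hD0 n ?_ ?_ hDle
    · intro i _
      simp only [hc]
      by_cases hi : i < n
      · rw [if_pos hi]; exact (hx i hi).le
      · rw [if_neg hi]
    · intro i hi
      simp only [hc]
      rw [if_pos hi]
      by_cases hi1 : i + 1 < n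
      · rw [if_pos hi1]; exact hxa i (i + 1) (Nat.le_succ i) hi1
      · rw [if_neg hi1]; exact (hx i hi).le
  have hcn : c n * D n = 0 := by simp [hc]
  have hterm : ∀ i, i < n → x i - y i ≤ x i * d i := by
    intro i hi
    have hxp := hx i hi
    have hyp := hy i hi
    have hexp : Real.log (y i) - Real.log (x i) + 1 ≤ y i / x i := by
      have := Real.add_one_le_exp (Real.log (y i) - Real.log (x i))
      rwa [Real.exp_sub, Real.exp_log hyp, Real.exp_log hxp] at this
    have hmul : x i * (Real.log (y i) - Real.log (x i) + 1) ≤ y i := by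
      have := mul_le_mul_of_nonneg_left hexp hxp.le
      rwa [mul_div_cancel₀ _ hxp.ne'] at this
    show x i - y i ≤ x i * (Real.log (x i) - Real.log (y i))
    nlinarith [hmul]
  have hsum : ∑ i ∈ Finset.range n, (x i - y i) ≤ ∑ i ∈ Finset.range n, c i * (D (i + 1) - D i) := by
    refine Finset.sum_le_sum fun i hi => ?_
    have hi' := Finset.mem_range.mp hi
    have hDd : D (i + 1) - D i = d i := by simp [hD, Finset.sum_range_succ]
    rw [hDd]
    have hci : c i = x i := by simp only [hc]; rw [if_pos hi']
    rw [hci]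
    exact hterm i hi'
  have : ∑ i ∈ Finset.range n, (x i - y i) ≤ 0 := le_trans hsum (key.trans_eq hcn)
  rw [Finset.sum_sub_distrib] at this
  linarith

lemma sum_le_of_prefix_prod (x y : ℕ → ℝ) (hx0 : ∀ i, 0 ≤ x i) (hy0 : ∀ i, 0 ≤ y i)
    (hxa : ∀ i j, i ≤ j → x j ≤ x i)
    (h : ∀ k, ∏ i ∈ Finset.range k, x i ≤ ∏ i ∈ Finset.range k, y i) (n : ℕ) :
    ∑ i ∈ Finset.range n, x i ≤ ∑ i ∈ Finset.range n, y i := by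
  have hy_of : ∀ m, 0 < ∏ i ∈ Finset.range m, x i → ∀ i, i < m → 0 < y i := by
    intro m hm i hi
    rcases (hy0 i).lt_or_eq with h' | h'
    · exact h'
    · exfalso
      have hzero : ∏ i ∈ Finset.range m, y i = 0 :=
        Finset.prod_eq_zero (Finset.mem_range.mpr hi) h'.symm
      have hle := h m
      rw [hzero] at hle
      exact absurd (lt_of_lt_of_le hm hle) (lt_irrefl 0)
  by_cases hpos : ∀ i, i < n → 0 < x i
  · refine pos_core x y n hpos ?_ (fun i j hij hj => hxa i j hij) (fun k _ => h k)
    intro i hi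
    have hxprod : 0 < ∏ j ∈ Finset.range (i + 1), x j :=
      Finset.prod_pos fun j hj => hpos j ((Finset.mem_range.mp hj).trans_le hi)
    exact hy_of (i + 1) hxprod i (Nat.lt_succ_self i)
  · push_neg at hpos
    obtain ⟨i0, hi0n, hi0⟩ := hpos
    have hex : ∃ i, x i = 0 := ⟨i0, le_antisymm hi0 (hx0 i0)⟩
    classical
    set j := Nat.find hex with hj
    have hxj : x j = 0 := Nat.find_spec hex
    have hjmin : ∀ i, i < j → 0 < x i := fun i hi =>
      (hx0 i).lt_of_ne (fun he => Nat.find_min hex hi he.symm)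
    have hjn : j ≤ n := by
      by_contra hc
      push_neg at hc
      exact absurd (le_antisymm hi0 (hx0 i0)) (hjmin i0 (hi0n.trans hc)).ne'
    have hxzero : ∀ i, j ≤ i → x i = 0 := fun i hi =>
      le_antisymm ((hxa j i hi).trans_eq hxj) (hx0 i)
    have hsx : ∑ i ∈ Finset.range n, x i = ∑ i ∈ Finset.range j, x i := by
      rw [← Finset.sum_range_add_sum_Ico _ hjn]
      have : ∑ i ∈ Finset.Ico j n, x i = 0 :=
        Finset.sum_eq_zero fun i hi => hxzero i (Finset.mem_Ico.mp hi).1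
      rw [this, add_zero]
    have hcore : ∑ i ∈ Finset.range j, x i ≤ ∑ i ∈ Finset.range j, y i := by
      refine pos_core x y j hjmin ?_ (fun a b hab hb => hxa a b hab) (fun k _ => h k)
      intro i hi
      have hxprod : 0 < ∏ l ∈ Finset.range (i + 1), x l :=
        Finset.prod_pos fun l hl => hjmin l ((Finset.mem_range.mp hl).trans_le hi)
      exact hy_of (i + 1) hxprod i (Nat.lt_succ_self i)
    have hmono : ∑ i ∈ Finset.range j, y i ≤ ∑ i ∈ Finset.range n, y i :=
      Finset.sum_le_sum_of_subset_of_nonneg (Finset.range_subset_range.mpr hjn)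
        (fun i _ _ => hy0 i)
    rw [hsx]
    exact hcore.trans hmono


/-! ### Sorting helpers -/

lemma strictMono_fin_le_apply_aux {k n : ℕ} {e : Fin k → Fin n} (he : StrictMono e) :
    ∀ v (hv : v < k), v ≤ (e ⟨v, hv⟩ : ℕ) := by
  intro v
  induction v with
  | zero => intro hv; exact Nat.zero_le _
  | succ m ih =>
    intro hv
    have hm : m < k := Nat.lt_of_succ_lt hv
    have h3 : (e ⟨m, hm⟩ : ℕ) < (e ⟨m + 1, hv⟩ : ℕ) := he (by simp [Fin.lt_def])
    have h4 := ih hm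
    omega

lemma strictMono_fin_le_apply {k n : ℕ} {e : Fin k → Fin n} (he : StrictMono e) (i : Fin k) :
    (i : ℕ) ≤ (e i : ℕ) := by
  have := strictMono_fin_le_apply_aux he i.1 i.2
  simpa using this

/-- The tuple `w` sorted in decreasing order. -/
noncomputable def descTuple {n : ℕ} (w : Fin n → ℝ) : Fin n → ℝ :=
  fun i => w (Tuple.sort w (Fin.rev i))

lemma descTuple_antitone {n : ℕ} (w : Fin n → ℝ) : Antitone (descTuple w) := by
  intro i j hij
  exact Tuple.monotone_sort w (by rwa [Fin.rev_le_rev])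

lemma descTuple_nonneg {n : ℕ} {w : Fin n → ℝ} (hw : ∀ i, 0 ≤ w i) (i : Fin n) :
    0 ≤ descTuple w i := hw _

lemma sum_comp_descTuple {n : ℕ} (w : Fin n → ℝ) (F : ℝ → ℝ) :
    ∑ i, F (descTuple w i) = ∑ i, F (w i) := by
  exact Equiv.sum_comp (Fin.revPerm.trans (Tuple.sort w)) (fun j => F (w j))

/-- any `k`-subproduct of nonneg `w` is at most the product of the top `k` values. -/
lemma prod_le_prod_descTuple {n k : ℕ} {w : Fin n → ℝ} (hw : ∀ i, 0 ≤ w i) (hk : k ≤ n)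
    (f : Fin k → Fin n) (hf : Function.Injective f) :
    ∏ i, w (f i) ≤ ∏ i : Fin k, descTuple w (Fin.castLE hk i) := by
  classical
  set e : Equiv.Perm (Fin n) := Fin.revPerm.trans (Tuple.sort w) with he
  have hwe : ∀ j, w j = descTuple w (e.symm j) := by
    intro j
    have : e (e.symm j) = j := e.apply_symm_apply j
    simp only [descTuple]
    rw [show Tuple.sort w (Fin.rev (e.symm j)) = e (e.symm j) from rfl, this]
  have h1 : ∏ i, w (f i) = ∏ i, descTuple w (e.symm (f i)) := by
    refine Finset.prod_congr rfl fun i _ => hwe (f i)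
  rw [h1]
  obtain ⟨g, σ, hg, hfg⟩ := exists_strictMono_comp_perm (fun i => e.symm (f i))
    (fun a b hab => hf (e.symm.injective hab))
  have h2 : ∏ i, descTuple w (e.symm (f i)) = ∏ i, descTuple w (g (σ i)) := by
    refine Finset.prod_congr rfl fun i _ => congrArg (descTuple w) (congrFun hfg i)
  rw [h2]
  have h3 : ∏ i, descTuple w (g (σ i)) = ∏ i, descTuple w (g i) :=
    Equiv.prod_comp σ (fun i => descTuple w (g i))
  rw [h3]
  refine Finset.prod_le_prod (fun i _ => descTuple_nonneg hw _) (fun i _ => ?_)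
  refine descTuple_antitone w ?_
  rw [Fin.le_def]
  exact strictMono_fin_le_apply hg i

end SchattenAux

open Matrix

namespace SchattenAux
open scoped ComplexOrder
lemma eigenvalues_AHA_nonneg {m : ℕ} (A : Matrix (Fin m) (Fin m) ℂ) (i : Fin m) :
    0 ≤ (Matrix.isHermitian_conjTranspose_mul_self A).eigenvalues i :=
  (Matrix.posSemidef_conjTranspose_mul_self A).eigenvalues_nonneg i
end SchattenAux

/-- Singular values of a complex square matrix: the square roots of the
eigenvalues of `Aᴴ * A` (i.e. the eigenvalues of `|A| = (Aᴴ A)^(1/2)`). -/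
noncomputable def singVal {n : ℕ} (A : Matrix (Fin n) (Fin n) ℂ) : Fin n → ℝ :=
  fun i => Real.sqrt ((Matrix.isHermitian_conjTranspose_mul_self A).eigenvalues i)

/-- `trace |A|^p = ∑ sᵢ(A)^p`. -/
noncomputable def traceAbsPow {n : ℕ} (A : Matrix (Fin n) (Fin n) ℂ) (p : ℝ) : ℝ :=
  ∑ i, singVal A i ^ p

/-- The Schatten `p`-norm `‖A‖_p = (trace |A|^p)^(1/p)`. -/
noncomputable def schattenNorm {n : ℕ} (A : Matrix (Fin n) (Fin n) ℂ) (p : ℝ) : ℝ :=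
  traceAbsPow A p ^ (1 / p)

theorem stmt5 {n : ℕ} (A : Matrix (Fin n) (Fin n) ℂ) (p : ℝ) (hp : 2 ≤ p) :
    traceAbsPow (A * A) (p / 2) ≤ traceAbsPow A p := by
  classical
  have hp0 : (0 : ℝ) < p := lt_of_lt_of_le two_pos hp
  have hp4 : (0 : ℝ) ≤ p / 4 := by linarith
  have hp2 : (0 : ℝ) ≤ p / 2 := by linarith
  set μ : Fin n → ℝ := (Matrix.isHermitian_conjTranspose_mul_self A).eigenvalues with hμdef
  set ν : Fin n → ℝ := (Matrix.isHermitian_conjTranspose_mul_self (A * A)).eigenvalues with hνdef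
  have hμ0 : ∀ i, 0 ≤ μ i := fun i => SchattenAux.eigenvalues_AHA_nonneg A i
  have hν0 : ∀ i, 0 ≤ ν i := fun i => SchattenAux.eigenvalues_AHA_nonneg (A * A) i
  set δμ : Fin n → ℝ := SchattenAux.descTuple μ with hδμdef
  set δν : Fin n → ℝ := SchattenAux.descTuple ν with hδνdef
  have hδμ0 : ∀ i, 0 ≤ δμ i := fun i => SchattenAux.descTuple_nonneg hμ0 i
  have hδν0 : ∀ i, 0 ≤ δν i := fun i => SchattenAux.descTuple_nonneg hν0 i
  -- Weyl inequality for top-k products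
  have hweyl : ∀ k (hk : k ≤ n),
      ∏ i : Fin k, δν (Fin.castLE hk i)
        ≤ (∏ i : Fin k, δμ (Fin.castLE hk i)) * (∏ i : Fin k, δμ (Fin.castLE hk i)) := by
    intro k hk
    set b : ℝ := ∏ i : Fin k, δμ (Fin.castLE hk i) with hbdef
    have hb0 : 0 ≤ b := Finset.prod_nonneg fun i _ => hδμ0 _
    set f : Fin k → Fin n :=
      fun i => (Fin.revPerm.trans (Tuple.sort ν)) (Fin.castLE hk i) with hfdef
    have hfinj : Function.Injective f := fun a c hac => by
      have := (Fin.revPerm.trans (Tuple.sort ν)).injective hac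
      exact Fin.castLE_injective hk this
    have hfν : ∀ i, ν (f i) = δν (Fin.castLE hk i) := fun i => rfl
    have := SchattenAux.weyl_step A f hfinj b hb0 (fun g hg =>
      SchattenAux.prod_le_prod_descTuple hμ0 hk g hg)
    calc ∏ i : Fin k, δν (Fin.castLE hk i) = ∏ i, ν (f i) :=
          Finset.prod_congr rfl fun i _ => (hfν i).symm
      _ ≤ b * b := this
  -- set up padded sequences
  set x : ℕ → ℝ := fun i => if h : i < n then δν ⟨i, h⟩ ^ (p / 4) else 0 with hxdef
  set y : ℕ → ℝ := fun i => if h : i < n then δμ ⟨i, h⟩ ^ (p / 2) else 0 with hydef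
  have hx0 : ∀ i, 0 ≤ x i := by
    intro i; simp only [hxdef]
    split
    · exact Real.rpow_nonneg (hδν0 _) _
    · exact le_rfl
  have hy0 : ∀ i, 0 ≤ y i := by
    intro i; simp only [hydef]
    split
    · exact Real.rpow_nonneg (hδμ0 _) _
    · exact le_rfl
  have hxa : ∀ i j : ℕ, i ≤ j → x j ≤ x i := by
    intro i j hij
    simp only [hxdef]
    by_cases hj : j < n
    · have hi : i < n := lt_of_le_of_lt hij hj
      rw [dif_pos hj, dif_pos hi]
      exact Real.rpow_le_rpow (hδν0 _)
        (SchattenAux.descTuple_antitone ν (by simpa [Fin.le_def] using hij)) hp4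
    · rw [dif_neg hj]
      exact hx0 i
  have hprefix : ∀ k, ∏ i ∈ Finset.range k, x i ≤ ∏ i ∈ Finset.range k, y i := by
    intro k
    by_cases hk : k ≤ n
    · have hxp : ∏ i ∈ Finset.range k, x i
          = (∏ i : Fin k, δν (Fin.castLE hk i)) ^ (p / 4) := by
        rw [Finset.prod_range fun i => x i]
        rw [← Real.finset_prod_rpow _ _ (fun i _ => hδν0 _) _]
        refine Finset.prod_congr rfl fun i _ => ?_
        simp only [hxdef]
        rw [dif_pos (lt_of_lt_of_le i.isLt hk)]
        rfl
      have hyp : ∏ i ∈ Finset.range k, y i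
          = ((∏ i : Fin k, δμ (Fin.castLE hk i)) ^ (p / 4)) ^ (2 : ℕ) := by
        rw [Finset.prod_range fun i => y i]
        set b : ℝ := ∏ i : Fin k, δμ (Fin.castLE hk i) with hbdef
        have hb0 : 0 ≤ b := Finset.prod_nonneg fun i _ => hδμ0 _
        have h1 : (b ^ (p / 4)) ^ (2 : ℕ) = b ^ (p / 2) := by
          rw [← Real.rpow_natCast (b ^ (p / 4)) 2, ← Real.rpow_mul hb0]
          congr 1
          push_cast
          ring
        rw [h1, hbdef, ← Real.finset_prod_rpow _ _ (fun i _ => hδμ0 _) _]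
        refine Finset.prod_congr rfl fun i _ => ?_
        simp only [hydef]
        rw [dif_pos (lt_of_lt_of_le i.isLt hk)]
        rfl
      rw [hxp, hyp]
      have h2 : (∏ i : Fin k, δν (Fin.castLE hk i)) ^ (p / 4)
          ≤ ((∏ i : Fin k, δμ (Fin.castLE hk i)) * (∏ i : Fin k, δμ (Fin.castLE hk i))) ^ (p / 4) :=
        Real.rpow_le_rpow (Finset.prod_nonneg fun i _ => hδν0 _) (hweyl k hk) hp4
      have h3 : ((∏ i : Fin k, δμ (Fin.castLE hk i)) * (∏ i : Fin k, δμ (Fin.castLE hk i))) ^ (p / 4)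
          = ((∏ i : Fin k, δμ (Fin.castLE hk i)) ^ (p / 4)) ^ (2 : ℕ) := by
        rw [Real.mul_rpow (Finset.prod_nonneg fun i _ => hδμ0 _)
          (Finset.prod_nonneg fun i _ => hδμ0 _)]
        rw [pow_two]
      rw [← h3]
      exact h2
    · push_neg at hk
      have hxz : ∏ i ∈ Finset.range k, x i = 0 :=
        Finset.prod_eq_zero (Finset.mem_range.mpr hk) (by simp [hxdef])
      have hyz : ∏ i ∈ Finset.range k, y i = 0 :=
        Finset.prod_eq_zero (Finset.mem_range.mpr hk) (by simp [hydef])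
      rw [hxz, hyz]
  have hmain := SchattenAux.sum_le_of_prefix_prod x y hx0 hy0 hxa hprefix n
  -- identify the two sides
  have hLHS : traceAbsPow (A * A) (p / 2) = ∑ i ∈ Finset.range n, x i := by
    rw [Finset.sum_range fun i => x i]
    simp only [traceAbsPow, singVal]
    have h1 : ∀ i : Fin n, Real.sqrt (ν i) ^ (p / 2) = ν i ^ (p / 4) := by
      intro i
      rw [Real.sqrt_eq_rpow, ← Real.rpow_mul (hν0 i)]
      congr 1
      ring
    calc ∑ i, Real.sqrt ((Matrix.isHermitian_conjTranspose_mul_self (A * A)).eigenvalues i) ^ (p / 2)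
        = ∑ i, ν i ^ (p / 4) := Finset.sum_congr rfl fun i _ => h1 i
      _ = ∑ i, δν i ^ (p / 4) :=
          (SchattenAux.sum_comp_descTuple ν (fun t => t ^ (p / 4))).symm
      _ = ∑ i : Fin n, x i.1 := by
          refine Finset.sum_congr rfl fun i _ => ?_
          simp only [hxdef]
          rw [dif_pos i.isLt]
  have hRHS : traceAbsPow A p = ∑ i ∈ Finset.range n, y i := by
    rw [Finset.sum_range fun i => y i]
    simp only [traceAbsPow, singVal]
    have h1 : ∀ i : Fin n, Real.sqrt (μ i) ^ p = μ i ^ (p / 2) := by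
      intro i
      rw [Real.sqrt_eq_rpow, ← Real.rpow_mul (hμ0 i)]
      congr 1
      ring
    calc ∑ i, Real.sqrt ((Matrix.isHermitian_conjTranspose_mul_self A).eigenvalues i) ^ p
        = ∑ i, μ i ^ (p / 2) := Finset.sum_congr rfl fun i _ => h1 i
      _ = ∑ i, δμ i ^ (p / 2) :=
          (SchattenAux.sum_comp_descTuple μ (fun t => t ^ (p / 2))).symm
      _ = ∑ i : Fin n, y i.1 := by
          refine Finset.sum_congr rfl fun i _ => ?_
          simp only [hydef]
          rw [dif_pos i.isLt]
  rw [hLHS, hRHS]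
  exact hmain
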